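/- Let b₀ > 0 and for each T ≥ 0 let β_T denote the unique positive solution of log β + b₀·β = −T·b₀. Then β_T is asymptotic to e^{-T·b₀} as T → +∞; that is, lim_{T→+∞} β_T · e^{T·b₀} = 1. -/

import Mathlib

open Filter

/-- `β_T ~ e^{-T b₀}` as `T → +∞`, i.e. `β_T e^{T b₀} → 1`. -/
theorem beta_asymptotic (b₀ : ℝ) (hb₀ : 0 < b₀) (β : ℝ → ℝ)
    (hβ : ∀ T : ℝ, 0 ≤ T → 0 < β T ∧ Real.log (β T) + b₀ * β T = -T * b₀) :
    Tendsto (fun T => β T * Real.exp (T * b₀)) atTop (nhds 1) := by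
  -- key identity: for T ≥ 0, β T * exp(T b₀) = exp(-(b₀ * β T))
  have key : ∀ T : ℝ, 0 ≤ T → β T * Real.exp (T * b₀) = Real.exp (-(b₀ * β T)) := by
    intro T hT
    obtain ⟨hpos, heq⟩ := hβ T hT
    conv_lhs => rw [← Real.exp_log hpos]
    rw [← Real.exp_add]
    congr 1
    linarith
  -- β T ≤ exp (-T * b₀) for T ≥ 0
  have hub : ∀ T : ℝ, 0 ≤ T → β T ≤ Real.exp (-T * b₀) := by
    intro T hT
    obtain ⟨hpos, heq⟩ := hβ T hT
    have : Real.log (β T) ≤ -T * b₀ := by nlinarith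
    calc β T = Real.exp (Real.log (β T)) := (Real.exp_log hpos).symm
    _ ≤ Real.exp (-T * b₀) := Real.exp_le_exp.mpr this
  -- β T → 0
  have hβ0 : Tendsto β atTop (nhds 0) := by
    have hexp : Tendsto (fun T : ℝ => Real.exp (-T * b₀)) atTop (nhds 0) := by
      have : Tendsto (fun T : ℝ => -T * b₀) atTop atBot := by
        apply Tendsto.atBot_mul_const hb₀
        exact tendsto_neg_atTop_atBot.comp tendsto_id
      exact Real.tendsto_exp_atBot.comp this
    refine tendsto_of_tendsto_of_tendsto_of_le_of_le' tendsto_const_nhds hexp ?_ ?_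
    · filter_upwards [eventually_ge_atTop (0:ℝ)] with T hT
      exact (hβ T hT).1.le
    · filter_upwards [eventually_ge_atTop (0:ℝ)] with T hT
      exact hub T hT
  have : Tendsto (fun T => Real.exp (-(b₀ * β T))) atTop (nhds 1) := by
    have h2 : Tendsto (fun T => -(b₀ * β T)) atTop (nhds 0) := by
      have := (hβ0.const_mul b₀).neg
      simpa using this
    simpa [Function.comp_def] using (Real.continuous_exp.continuousAt.tendsto.comp h2)
  refine this.congr' ?_
  filter_upwards [eventually_ge_atTop (0:ℝ)] with T hT
  exact (key T hT).symm
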